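/- Let f(x,y) be a real binary form of degree n ≥ 3 with n distinct real roots. Then the Hessian determinant H(f) = f_xx·f_yy − f_xy² is strictly negative at every point (x,y) ∈ ℝ² \ {(0,0)}. -/

import Mathlib

open MvPolynomial

/-- The real linear binary form `p.1 * x + p.2 * y`. -/
noncomputable def lin (p : ℝ × ℝ) : MvPolynomial (Fin 2) ℝ :=
  C p.1 * X 0 + C p.2 * X 1

/-- A binary form `f` has `m` distinct real roots: it factors over `ℝ` into `m`
pairwise non-proportional (nonzero) real linear forms, up to a nonzero constant. -/
noncomputable def HasDistinctRealRoots (f : MvPolynomial (Fin 2) ℝ) (m : ℕ) : Prop :=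
  ∃ (c : ℝ) (l : Fin m → ℝ × ℝ), c ≠ 0 ∧ (∀ i, l i ≠ 0) ∧
    (∀ i j, i ≠ j → (l i).1 * (l j).2 - (l j).1 * (l i).2 ≠ 0) ∧
    f = C c * ∏ i, lin (l i)
/-- The Hessian determinant `f_xx f_yy - f_xy ^ 2` of a binary form. -/
noncomputable def hess (f : MvPolynomial (Fin 2) ℝ) : MvPolynomial (Fin 2) ℝ :=
  pderiv 0 (pderiv 0 f) * pderiv 1 (pderiv 1 f) - (pderiv 0 (pderiv 1 f)) ^ 2

/-! ### Auxiliary lemmas -/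

lemma pderiv_lin (k : Fin 2) (p : ℝ × ℝ) : pderiv k (lin p) = C (![p.1, p.2] k) := by
  fin_cases k <;> simp [lin]

lemma eval_lin (v : Fin 2 → ℝ) (p : ℝ × ℝ) : eval v (lin p) = p.1 * v 0 + p.2 * v 1 := by
  simp [lin]

lemma pderiv_prod {ι : Type*} [DecidableEq ι] (k : Fin 2) (s : Finset ι) (g : ι → ℝ × ℝ) :
    pderiv k (∏ i ∈ s, lin (g i)) =
      ∑ i ∈ s, C (![(g i).1, (g i).2] k) * ∏ j ∈ s.erase i, lin (g j) := by
  induction s using Finset.induction_on with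
  | empty => simp
  | @insert a s ha ih =>
    have key : ∀ i ∈ s, lin (g a) * (C (![(g i).1, (g i).2] k) * ∏ j ∈ s.erase i, lin (g j))
        = C (![(g i).1, (g i).2] k) * ∏ j ∈ (insert a s).erase i, lin (g j) := by
      intro i hi
      rw [Finset.erase_insert_of_ne (by rintro rfl; exact ha hi),
        Finset.prod_insert (by simp [ha, Finset.mem_erase])]
      ring
    rw [Finset.prod_insert ha, pderiv_mul, ih, pderiv_lin, Finset.sum_insert ha,
      Finset.erase_insert ha, Finset.mul_sum, Finset.sum_congr rfl key]

lemma pderiv2_prod {ι : Type*} [DecidableEq ι] (k k' : Fin 2) (s : Finset ι) (g : ι → ℝ × ℝ) :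
    pderiv k (pderiv k' (∏ i ∈ s, lin (g i))) =
      ∑ i ∈ s, C (![(g i).1, (g i).2] k') *
        ∑ j ∈ s.erase i, C (![(g j).1, (g j).2] k) * ∏ m ∈ (s.erase i).erase j, lin (g m) := by
  rw [pderiv_prod, map_sum]
  apply Finset.sum_congr rfl
  intro i _
  rw [pderiv_mul, pderiv_C, pderiv_prod]
  simp

lemma eval_pderiv2_good {ι : Type*} [DecidableEq ι] (k k' : Fin 2) (s : Finset ι)
    (g : ι → ℝ × ℝ) (v : Fin 2 → ℝ) (hL : ∀ i ∈ s, eval v (lin (g i)) ≠ 0) :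
    eval v (pderiv k (pderiv k' (∏ i ∈ s, lin (g i)))) =
      (∏ i ∈ s, eval v (lin (g i))) *
        ((∑ i ∈ s, ![(g i).1, (g i).2] k' / eval v (lin (g i))) *
          (∑ i ∈ s, ![(g i).1, (g i).2] k / eval v (lin (g i))) -
         ∑ i ∈ s, (![(g i).1, (g i).2] k' / eval v (lin (g i))) *
            (![(g i).1, (g i).2] k / eval v (lin (g i)))) := by
  set L : ι → ℝ := fun i => eval v (lin (g i)) with hLdef
  set P : ℝ := ∏ i ∈ s, L i with hP
  set γ : ι → ℝ := fun i => ![(g i).1, (g i).2] k / L i with hγ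
  set δ : ι → ℝ := fun i => ![(g i).1, (g i).2] k' / L i with hδ
  have h2 : ∀ i ∈ s, ∀ j ∈ s.erase i, (∏ m ∈ (s.erase i).erase j, L m) = P / (L i * L j) := by
    intro i hi j hj
    rw [eq_div_iff (mul_ne_zero (hL i hi) (hL j (Finset.mem_of_mem_erase hj)))]
    calc (∏ m ∈ (s.erase i).erase j, L m) * (L i * L j)
        = ((∏ m ∈ (s.erase i).erase j, L m) * L j) * L i := by ring
      _ = (∏ m ∈ s.erase i, L m) * L i := by rw [Finset.prod_erase_mul _ _ hj]
      _ = P := Finset.prod_erase_mul _ _ hi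
  rw [pderiv2_prod]
  rw [map_sum]
  have step : ∀ i ∈ s,
      eval v (C (![(g i).1, (g i).2] k') *
        ∑ j ∈ s.erase i, C (![(g j).1, (g j).2] k) * ∏ m ∈ (s.erase i).erase j, lin (g m))
      = P * (δ i * ((∑ m ∈ s, γ m) - γ i)) := by
    intro i hi
    rw [eval_mul, eval_C, map_sum]
    have inner : ∀ j ∈ s.erase i,
        eval v (C (![(g j).1, (g j).2] k) * ∏ m ∈ (s.erase i).erase j, lin (g m))
        = (P / L i) * γ j := by
      intro j hj
      rw [eval_mul, eval_C, map_prod]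
      have : (∏ m ∈ (s.erase i).erase j, eval v (lin (g m))) = P / (L i * L j) := h2 i hi j hj
      rw [this, hγ]
      have hLj := hL j (Finset.mem_of_mem_erase hj)
      field_simp
    rw [Finset.sum_congr rfl inner, ← Finset.mul_sum, Finset.sum_erase_eq_sub hi]
    have hLi := hL i hi
    rw [hδ]
    field_simp
  rw [Finset.sum_congr rfl step, ← Finset.mul_sum]
  congr 1
  have expand : ∀ i ∈ s, δ i * ((∑ m ∈ s, γ m) - γ i) = δ i * (∑ m ∈ s, γ m) - δ i * γ i := by
    intro i _; ring
  rw [Finset.sum_congr rfl expand, Finset.sum_sub_distrib, ← Finset.sum_mul]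

lemma eval_pderiv2_bad {ι : Type*} [DecidableEq ι] (k k' : Fin 2) (s : Finset ι)
    (g : ι → ℝ × ℝ) (v : Fin 2 → ℝ) (i0 : ι) (hi0 : i0 ∈ s)
    (h0 : eval v (lin (g i0)) = 0) (hL : ∀ i ∈ s.erase i0, eval v (lin (g i)) ≠ 0) :
    eval v (pderiv k (pderiv k' (∏ i ∈ s, lin (g i)))) =
      (∏ i ∈ s.erase i0, eval v (lin (g i))) *
        (![(g i0).1, (g i0).2] k' *
            (∑ j ∈ s.erase i0, ![(g j).1, (g j).2] k / eval v (lin (g j))) +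
         ![(g i0).1, (g i0).2] k *
            (∑ j ∈ s.erase i0, ![(g j).1, (g j).2] k' / eval v (lin (g j)))) := by
  set L : ι → ℝ := fun i => eval v (lin (g i)) with hLdef
  set Q : ℝ := ∏ i ∈ s.erase i0, L i with hQ
  rw [pderiv2_prod, map_sum, ← Finset.add_sum_erase _ _ hi0]
  have t1 : eval v (C (![(g i0).1, (g i0).2] k') *
      ∑ j ∈ (s.erase i0), C (![(g j).1, (g j).2] k) * ∏ m ∈ ((s.erase i0)).erase j, lin (g m))
      = ![(g i0).1, (g i0).2] k' * (Q * ∑ j ∈ s.erase i0, ![(g j).1, (g j).2] k / L j) := by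
    rw [eval_mul, eval_C, map_sum]
    congr 1
    rw [Finset.mul_sum]
    apply Finset.sum_congr rfl
    intro j hj
    rw [eval_mul, eval_C, map_prod]
    have hprod : (∏ m ∈ (s.erase i0).erase j, L m) * L j = Q :=
      Finset.prod_erase_mul _ _ hj
    have hLj := hL j hj
    field_simp [← hprod]
    rw [← hprod]; change _ * ∏ x ∈ _, L x = _; field_simp
    exact (mul_div_cancel_right₀ _ hLj).symm
  have t2 : ∀ i ∈ s.erase i0, eval v (C (![(g i).1, (g i).2] k') *
      ∑ j ∈ s.erase i, C (![(g j).1, (g j).2] k) * ∏ m ∈ (s.erase i).erase j, lin (g m))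
      = ![(g i).1, (g i).2] k' * (![(g i0).1, (g i0).2] k * (Q / L i)) := by
    intro i hi
    have hii0 : i ≠ i0 := Finset.ne_of_mem_erase hi
    have hi0' : i0 ∈ s.erase i := Finset.mem_erase.mpr ⟨fun h => hii0 h.symm, hi0⟩
    rw [eval_mul, eval_C, map_sum]
    congr 1
    rw [← Finset.add_sum_erase _ _ hi0']
    have hz : ∀ j ∈ (s.erase i).erase i0,
        eval v (C (![(g j).1, (g j).2] k) * ∏ m ∈ (s.erase i).erase j, lin (g m)) = 0 := by
      intro j hj
      have hji0 : j ≠ i0 := Finset.ne_of_mem_erase hj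
      have : i0 ∈ (s.erase i).erase j :=
        Finset.mem_erase.mpr ⟨fun h => hji0 h.symm, hi0'⟩
      rw [eval_mul, map_prod]
      rw [Finset.prod_eq_zero this h0, mul_zero]
    rw [Finset.sum_congr rfl hz, Finset.sum_const_zero, add_zero, eval_mul, eval_C, map_prod]
    have hcomm : (s.erase i).erase i0 = (s.erase i0).erase i := Finset.erase_right_comm
    have hprod : (∏ m ∈ (s.erase i0).erase i, L m) * L i = Q :=
      Finset.prod_erase_mul _ _ hi
    have hLi := hL i hi
    rw [hcomm]
    field_simp [← hprod]
    rw [← hprod]; change _ * ∏ x ∈ _, L x = _; field_simp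
    exact (mul_div_cancel_right₀ _ hLi).symm
  rw [Finset.sum_congr rfl t2, t1]
  have : ∑ i ∈ s.erase i0, ![(g i).1, (g i).2] k' * (![(g i0).1, (g i0).2] k * (Q / L i))
      = ![(g i0).1, (g i0).2] k * (Q * ∑ j ∈ s.erase i0, ![(g j).1, (g j).2] k' / L j) := by
    rw [Finset.mul_sum, Finset.mul_sum]
    apply Finset.sum_congr rfl
    intro j hj
    field_simp
  rw [this]
  ring

lemma key_scalar (nn x y Sa Sb A B Cc : ℝ) (hy : y ≠ 0)
    (h1 : x*Sa + y*Sb = nn) (h2 : x*A + y*Cc = Sa) (h3 : x*Cc + y*B = Sb) :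
    (Sa^2 - A)*(Sb^2 - B) - (Sa*Sb - Cc)^2 = (nn-1)*(Sa^2 - nn*A)/y^2 := by
  have eSb : Sb = (nn - x*Sa)/y := by rw [eq_div_iff hy]; linear_combination h1
  have eCc : Cc = (Sa - x*A)/y := by rw [eq_div_iff hy]; linear_combination h2
  have eB : B = (nn - 2*x*Sa + x^2*A)/y^2 := by
    rw [eq_div_iff (pow_ne_zero 2 hy)]
    linear_combination y*h3 + h1 - x*h2
  rw [eSb, eCc, eB]; field_simp; ring

lemma cauchy_strict {n : ℕ} (γ : Fin n → ℝ) (i0 i1 : Fin n)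
    (hγ : γ i0 ≠ γ i1) : (∑ i, γ i)^2 < (n : ℝ) * ∑ i, (γ i)^2 := by
  have hid : (n : ℝ) * (∑ i, (γ i)^2) - (∑ i, γ i)^2
      = (1/2) * ∑ i, ∑ j, (γ i - γ j)^2 := by
    have inner : ∀ i : Fin n, ∑ j, (γ i - γ j)^2
        = (n : ℝ) * (γ i)^2 + (∑ j, (γ j)^2) - 2 * γ i * (∑ j, γ j) := by
      intro i
      have e : ∀ j : Fin n, (γ i - γ j)^2 = (γ i)^2 + (γ j)^2 - 2 * (γ i * γ j) := by
        intro j; ring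
      rw [Finset.sum_congr rfl (fun j _ => e j), Finset.sum_sub_distrib,
        Finset.sum_add_distrib, Finset.sum_const, ← Finset.mul_sum, Finset.card_univ,
        Fintype.card_fin, nsmul_eq_mul]
      rw [← Finset.mul_sum]
      ring
    rw [Finset.sum_congr rfl (fun i _ => inner i), Finset.sum_sub_distrib,
      Finset.sum_add_distrib, Finset.sum_const, ← Finset.sum_mul]
    have h1 : ∑ i : Fin n, (n:ℝ) * (γ i)^2 = (n:ℝ) * ∑ i, (γ i)^2 := by
      rw [Finset.mul_sum]
    have h2 : ∑ i : Fin n, 2 * γ i = 2 * ∑ i, γ i := by rw [Finset.mul_sum]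
    rw [h1, h2, Finset.card_univ, Fintype.card_fin, nsmul_eq_mul]
    ring
  have hpos : 0 < ∑ i : Fin n, ∑ j, (γ i - γ j)^2 :=
    Finset.sum_pos' (fun i _ => Finset.sum_nonneg fun j _ => sq_nonneg _)
      ⟨i0, Finset.mem_univ i0, Finset.sum_pos' (fun j _ => sq_nonneg _)
        ⟨i1, Finset.mem_univ i1, sq_pos_of_ne_zero (sub_ne_zero.mpr hγ)⟩⟩
  nlinarith [hid, hpos]

set_option maxHeartbeats 2000000 in
theorem stmt_11 (n : ℕ) (hn : 3 ≤ n) (f : MvPolynomial (Fin 2) ℝ)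
    (hhom : f.IsHomogeneous n) (hroots : HasDistinctRealRoots f n) :
    ∀ x y : ℝ, (x, y) ≠ (0, 0) → eval ![x, y] (hess f) < 0 := by
  obtain ⟨c, l, hc, hl0, hdist, hf⟩ := hroots
  intro x y hxy
  have hxy' : ¬ (x = 0 ∧ y = 0) := by
    intro ⟨h1, h2⟩; exact hxy (by rw [h1, h2])
  have hn2 : (2:ℝ) ≤ (n:ℝ) := by exact_mod_cast le_trans (by norm_num) hn
  set v : Fin 2 → ℝ := ![x, y] with hv
  set L : Fin n → ℝ := fun i => eval v (lin (l i)) with hLdef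
  have hv0 : v 0 = x := rfl
  have hv1 : v 1 = y := rfl
  have hLval : ∀ i, L i = (l i).1 * x + (l i).2 * y := by
    intro i; rw [hLdef]; simp only []; rw [eval_lin, hv0, hv1]
  -- the hessian in terms of second derivatives of the pure product
  set E : Fin 2 → Fin 2 → ℝ :=
    fun k k' => eval v (pderiv k (pderiv k' (∏ i, lin (l i)))) with hE
  have hders : ∀ k k' : Fin 2, eval v (pderiv k (pderiv k' f)) = c * E k k' := by
    intro k k'
    rw [hf, pderiv_C_mul, pderiv_C_mul, eval_mul, eval_C, hE]
  have hhess : eval v (hess f) = c^2 * (E 0 0 * E 1 1 - E 0 1 ^ 2) := by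
    rw [hess, map_sub, eval_mul, eval_pow, hders, hders, hders]
    ring
  by_cases hall : ∀ i, L i ≠ 0
  case pos =>
    -- no linear factor vanishes at (x, y)
    set γ : Fin n → ℝ := fun i => (l i).1 / L i with hγ
    set δ : Fin n → ℝ := fun i => (l i).2 / L i with hδ
    set Sa : ℝ := ∑ i, γ i with hSa
    set Sb : ℝ := ∑ i, δ i with hSb
    set A : ℝ := ∑ i, γ i * γ i with hA
    set B : ℝ := ∑ i, δ i * δ i with hB
    set Cc : ℝ := ∑ i, δ i * γ i with hCc
    set P : ℝ := ∏ i, L i with hP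
    have hP0 : P ≠ 0 := Finset.prod_ne_zero_iff.mpr (fun i _ => hall i)
    have hgood := fun (k k' : Fin 2) =>
      eval_pderiv2_good k k' Finset.univ l v (fun i _ => hall i)
    have hE00 : E 0 0 = P * (Sa * Sa - A) := by
      have h := hgood 0 0
      simp only [Matrix.cons_val_zero] at h
      exact h
    have hE11 : E 1 1 = P * (Sb * Sb - B) := by
      have h := hgood 1 1
      simp only [Matrix.cons_val_one, Matrix.head_cons] at h
      exact h
    have hE01 : E 0 1 = P * (Sb * Sa - Cc) := by
      have h := hgood 0 1
      simp only [Matrix.cons_val_zero, Matrix.cons_val_one, Matrix.head_cons] at h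
      exact h
    -- the Euler-type relations
    have hrel : ∀ i, x * γ i + y * δ i = 1 := by
      intro i
      have hq : x * γ i + y * δ i = ((l i).1 * x + (l i).2 * y) / L i := by
        rw [hγ, hδ]; ring
      rw [hq, ← hLval i, div_self (hall i)]
    have h1 : x * Sa + y * Sb = (n : ℝ) := by
      rw [hSa, hSb, Finset.mul_sum, Finset.mul_sum, ← Finset.sum_add_distrib,
        Finset.sum_congr rfl (fun i _ => hrel i)]
      simp
    have h2 : x * A + y * Cc = Sa := by
      rw [hSa, hA, hCc, Finset.mul_sum, Finset.mul_sum, ← Finset.sum_add_distrib]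
      apply Finset.sum_congr rfl
      intro i _
      linear_combination γ i * hrel i
    have h3 : x * Cc + y * B = Sb := by
      rw [hSb, hB, hCc, Finset.mul_sum, Finset.mul_sum, ← Finset.sum_add_distrib]
      apply Finset.sum_congr rfl
      intro i _
      linear_combination δ i * hrel i
    -- distinctness of the ratios
    have hne01 : (⟨0, by omega⟩ : Fin n) ≠ (⟨1, by omega⟩ : Fin n) :=
      Fin.ne_of_val_ne (by norm_num)
    set i0 : Fin n := ⟨0, by omega⟩ with hi0def
    set i1 : Fin n := ⟨1, by omega⟩ with hi1def
    have hd := hdist i0 i1 hne01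
    have hnn1 : (0:ℝ) < (n:ℝ) - 1 := by linarith
    by_cases hy : y = 0
    case pos =>
      have hx : x ≠ 0 := fun h => hxy' ⟨h, hy⟩
      have h1' : y * Sb + x * Sa = (n:ℝ) := by linarith
      have h2' : y * B + x * Cc = Sb := by linarith
      have h3' : y * Cc + x * A = Sa := by linarith
      have hk := key_scalar n y x Sb Sa B A Cc hx h1' h2' h3'
      have hδne : δ i0 ≠ δ i1 := by
        show (l i0).2 / L i0 ≠ (l i1).2 / L i1
        intro he
        rw [div_eq_div_iff (hall i0) (hall i1)] at he
        apply hd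
        have e0 := hLval i0
        have e1 := hLval i1
        rw [e0, e1] at he
        rw [hy] at he
        have : ((l i0).1 * (l i1).2 - (l i1).1 * (l i0).2) * x = 0 := by
          linear_combination -he
        rcases mul_eq_zero.mp this with h | h
        · exact h
        · exact absurd h hx
      have hBsq : ∑ i, (δ i)^2 = B := by
        rw [hB]; exact Finset.sum_congr rfl (fun i _ => by rw [sq])
      have hcau := cauchy_strict δ i0 i1 hδne
      have hneg : Sb^2 - (n:ℝ) * B < 0 := by
        have hnb : (n:ℝ) * B = (n:ℝ) * ∑ i, (δ i)^2 := by rw [hBsq]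
        rw [hSb]
        linarith [hcau, hnb]
      have hEE : E 0 0 * E 1 1 - E 0 1 ^ 2
          = P^2 * ((Sb^2 - B) * (Sa^2 - A) - (Sb*Sa - Cc)^2) := by
        rw [hE00, hE11, hE01]; ring
      rw [hhess, hEE, hk]
      have hW : ((n:ℝ)-1) * (Sb^2 - (n:ℝ)*B) / x^2 < 0 :=
        div_neg_of_neg_of_pos (mul_neg_of_pos_of_neg hnn1 hneg)
          (sq_pos_of_ne_zero hx)
      exact mul_neg_of_pos_of_neg (sq_pos_of_ne_zero hc)
        (mul_neg_of_pos_of_neg (sq_pos_of_ne_zero hP0) hW)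
    case neg =>
      have hk := key_scalar n x y Sa Sb A B Cc hy h1 h2 h3
      have hγne : γ i0 ≠ γ i1 := by
        show (l i0).1 / L i0 ≠ (l i1).1 / L i1
        intro he
        rw [div_eq_div_iff (hall i0) (hall i1)] at he
        apply hd
        have e0 := hLval i0
        have e1 := hLval i1
        rw [e0, e1] at he
        have : ((l i0).1 * (l i1).2 - (l i1).1 * (l i0).2) * y = 0 := by
          linear_combination he
        rcases mul_eq_zero.mp this with h | h
        · exact h
        · exact absurd h hy
      have hAsq : ∑ i, (γ i)^2 = A := by
        rw [hA]; exact Finset.sum_congr rfl (fun i _ => by rw [sq])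
      have hcau := cauchy_strict γ i0 i1 hγne
      have hneg : Sa^2 - (n:ℝ) * A < 0 := by
        have hna : (n:ℝ) * A = (n:ℝ) * ∑ i, (γ i)^2 := by rw [hAsq]
        rw [hSa]
        linarith [hcau, hna]
      have hEE : E 0 0 * E 1 1 - E 0 1 ^ 2
          = P^2 * ((Sa^2 - A) * (Sb^2 - B) - (Sa*Sb - Cc)^2) := by
        rw [hE00, hE11, hE01]; ring
      rw [hhess, hEE, hk]
      have hW : ((n:ℝ)-1) * (Sa^2 - (n:ℝ)*A) / y^2 < 0 :=
        div_neg_of_neg_of_pos (mul_neg_of_pos_of_neg hnn1 hneg)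
          (sq_pos_of_ne_zero hy)
      exact mul_neg_of_pos_of_neg (sq_pos_of_ne_zero hc)
        (mul_neg_of_pos_of_neg (sq_pos_of_ne_zero hP0) hW)
  case neg =>
    push_neg at hall
    obtain ⟨i0, hi0⟩ := hall
    have hothers : ∀ j ∈ Finset.univ.erase i0, L j ≠ 0 := by
      intro j hj hLj
      have hji0 : j ≠ i0 := Finset.ne_of_mem_erase hj
      have hd := hdist i0 j (fun h => hji0 h.symm)
      have e0 : (l i0).1 * x + (l i0).2 * y = 0 := by rw [← hLval i0]; exact hi0
      have ej : (l j).1 * x + (l j).2 * y = 0 := by rw [← hLval j]; exact hLj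
      have hx0 : ((l i0).1 * (l j).2 - (l j).1 * (l i0).2) * x = 0 := by
        linear_combination (l j).2 * e0 - (l i0).2 * ej
      have hy0 : ((l i0).1 * (l j).2 - (l j).1 * (l i0).2) * y = 0 := by
        linear_combination (l i0).1 * ej - (l j).1 * e0
      refine hxy' ⟨?_, ?_⟩
      · rcases mul_eq_zero.mp hx0 with h | h
        · exact absurd h hd
        · exact h
      · rcases mul_eq_zero.mp hy0 with h | h
        · exact absurd h hd
        · exact h
    have e0 : (l i0).1 * x + (l i0).2 * y = 0 := by rw [← hLval i0]; exact hi0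
    have hab : ¬((l i0).1 = 0 ∧ (l i0).2 = 0) := by
      rintro ⟨ha, hb⟩
      exact hl0 i0 (Prod.ext ha hb)
    have ht : ∃ t : ℝ, t ≠ 0 ∧ x = t * (l i0).2 ∧ y = -t * (l i0).1 := by
      by_cases ha : (l i0).1 = 0
      · have hb : (l i0).2 ≠ 0 := fun hb => hab ⟨ha, hb⟩
        have hy0 : y = 0 := by
          rw [ha] at e0
          have : (l i0).2 * y = 0 := by linarith
          rcases mul_eq_zero.mp this with h | h
          · exact absurd h hb
          · exact h
        have hx0 : x ≠ 0 := fun h => hxy' ⟨h, hy0⟩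
        exact ⟨x / (l i0).2, div_ne_zero hx0 hb, by field_simp, by rw [ha, hy0]; ring⟩
      · refine ⟨-y / (l i0).1, ?_, ?_, ?_⟩
        · intro h
          have hy0 : y = 0 := by
            field_simp at h
            linarith
          have hx0 : x = 0 := by
            rw [hy0] at e0
            have : (l i0).1 * x = 0 := by linarith
            rcases mul_eq_zero.mp this with h | h
            · exact absurd h ha
            · exact h
          exact hxy' ⟨hx0, hy0⟩
        · field_simp
          linarith [e0]
        · field_simp
      -- end ht
    obtain ⟨t, ht0, htx, hty⟩ := ht
    set Q : ℝ := ∏ j ∈ Finset.univ.erase i0, L j with hQ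
    have hQ0 : Q ≠ 0 := Finset.prod_ne_zero_iff.mpr hothers
    set Sα : ℝ := ∑ j ∈ Finset.univ.erase i0, (l j).1 / L j with hSα
    set Sβ : ℝ := ∑ j ∈ Finset.univ.erase i0, (l j).2 / L j with hSβ
    have hbad := fun (k k' : Fin 2) =>
      eval_pderiv2_bad k k' Finset.univ l v i0 (Finset.mem_univ i0) hi0 hothers
    have hE00 : E 0 0 = Q * ((l i0).1 * Sα + (l i0).1 * Sα) := by
      have h := hbad 0 0
      simp only [Matrix.cons_val_zero] at h
      exact h
    have hE11 : E 1 1 = Q * ((l i0).2 * Sβ + (l i0).2 * Sβ) := by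
      have h := hbad 1 1
      simp only [Matrix.cons_val_one, Matrix.head_cons] at h
      exact h
    have hE01 : E 0 1 = Q * ((l i0).2 * Sα + (l i0).1 * Sβ) := by
      have h := hbad 0 1
      simp only [Matrix.cons_val_zero, Matrix.cons_val_one, Matrix.head_cons] at h
      exact h
    have hterm : ∀ j ∈ Finset.univ.erase i0,
        (l i0).2 * ((l j).1 / L j) - (l i0).1 * ((l j).2 / L j) = 1 / t := by
      intro j hj
      have hji0 : j ≠ i0 := Finset.ne_of_mem_erase hj
      have hd := hdist i0 j (fun h => hji0 h.symm)
      have hLj : L j = t * ((l j).1 * (l i0).2 - (l j).2 * (l i0).1) := by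
        rw [hLval j, htx, hty]; ring
      have hD : (l j).1 * (l i0).2 - (l j).2 * (l i0).1 ≠ 0 := by
        intro h; apply hd; linarith
      have hD' : (l i0).2 * (l j).1 - (l j).2 * (l i0).1 ≠ 0 := by
        intro h; apply hD; linarith
      rw [hLj]
      field_simp
    have hsum : (l i0).2 * Sα - (l i0).1 * Sβ = ((n:ℝ) - 1) / t := by
      rw [hSα, hSβ, Finset.mul_sum, Finset.mul_sum, ← Finset.sum_sub_distrib,
        Finset.sum_congr rfl hterm, Finset.sum_const,
        Finset.card_erase_of_mem (Finset.mem_univ i0), Finset.card_univ,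
        Fintype.card_fin, nsmul_eq_mul, Nat.cast_sub (by omega : 1 ≤ n)]
      push_cast
      ring
    have hw : (l i0).2 * Sα - (l i0).1 * Sβ ≠ 0 := by
      rw [hsum]
      exact div_ne_zero (by linarith) ht0
    have hEE : eval v (hess f)
        = -(c * Q * ((l i0).2 * Sα - (l i0).1 * Sβ))^2 := by
      rw [hhess, hE00, hE11, hE01]; ring
    rw [hEE]
    have hcqw : c * Q * ((l i0).2 * Sα - (l i0).1 * Sβ) ≠ 0 :=
      mul_ne_zero (mul_ne_zero hc hQ0) hw
    exact neg_lt_zero.mpr (sq_pos_of_ne_zero hcqw)
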